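/- For integers m ≥ 1 and n ≥ 0, write n = (m+1)·ν + r with 0 ≤ r ≤ m. Then the sum over all m-Dyck prefixes w of length n of m^(ĥ(w)), where ĥ(w) = (h(w) − r)/(m+1) is the reduced height, equals C(n, ν). -/

import Mathlib

open scoped Classical

/-- Height of a path: `true` is an up step (+1), `false` is a down step (-m). -/
def height (m : ℕ) (w : List Bool) : ℤ :=
  (w.count true : ℤ) - (m : ℤ) * (w.count false : ℤ)

/-- An m-Dyck prefix: every prefix (including the whole path) has nonnegative height. -/
def IsDyckPrefix (m : ℕ) (w : List Bool) : Prop :=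
  ∀ k ≤ w.length, 0 ≤ height m (w.take k)

/-- Reduced height of a path of length `n = (m+1)ν + r`. -/
def reducedHeight (m r : ℕ) (w : List Bool) : ℕ :=
  ((height m w - (r : ℤ)) / ((m : ℤ) + 1)).toNat

namespace DyckAux

lemma count_tf (w : List Bool) : w.count true + w.count false = w.length := by
  induction w with
  | nil => simp
  | cons a t ih => cases a <;> simp [List.count_cons] <;> omega

lemma height_eq (m : ℕ) (w : List Bool) :
    height m w = (w.length : ℤ) - (((m + 1) * w.count false : ℕ) : ℤ) := by
  have h : (w.count true : ℤ) + w.count false = w.length := by exact_mod_cast count_tf w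
  have h2 : ((m + 1) * w.count false : ℕ) = m * w.count false + w.count false := by ring
  unfold height
  rw [h2]
  push_cast
  linarith

lemma height_append (m : ℕ) (w : List Bool) (b : Bool) :
    height m (w ++ [b]) = height m w + (if b then 1 else -(m : ℤ)) := by
  cases b <;> simp [height, List.count_append] <;> ring

lemma height_nonneg {m : ℕ} {w : List Bool} (h : IsDyckPrefix m w) : 0 ≤ height m w := by
  have := h w.length le_rfl
  simpa using this

lemma isDyckPrefix_append (m : ℕ) (w : List Bool) (b : Bool) :
    IsDyckPrefix m (w ++ [b]) ↔ IsDyckPrefix m w ∧ 0 ≤ height m (w ++ [b]) := by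
  constructor
  · intro h
    refine ⟨fun k hk => ?_, ?_⟩
    · have := h k (by simp; omega)
      rwa [List.take_append_of_le_length hk] at this
    · have := h (w.length + 1) (by simp)
      rwa [List.take_of_length_le (by simp)] at this
  · rintro ⟨h1, h2⟩ k hk
    by_cases hk' : k ≤ w.length
    · rw [List.take_append_of_le_length hk']
      exact h1 k hk'
    · rw [List.take_of_length_le (by simp; omega)]
      exact h2

lemma ofFn_snoc {n : ℕ} (f : Fin n → Bool) (b : Bool) :
    List.ofFn (Fin.snoc f b : Fin (n+1) → Bool) = List.ofFn f ++ [b] := by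
  rw [List.ofFn_succ']
  simp [List.concat_eq_append]

noncomputable def cnt (m n d : ℕ) : ℕ :=
  (Finset.univ.filter (fun f : Fin n → Bool =>
    IsDyckPrefix m (List.ofFn f) ∧ (List.ofFn f).count false = d)).card

lemma height_ofFn {m n d : ℕ} {f : Fin n → Bool} (hd : (List.ofFn f).count false = d) :
    height m (List.ofFn f) = (n : ℤ) - (((m + 1) * d : ℕ) : ℤ) := by
  rw [height_eq, hd, List.length_ofFn]

lemma cnt_eq_zero {m n d : ℕ} (h : n < (m + 1) * d) : cnt m n d = 0 := by
  unfold cnt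
  rw [Finset.card_eq_zero, Finset.filter_eq_empty_iff]
  rintro f - ⟨hdy, hd⟩
  have h1 : 0 ≤ height m (List.ofFn f) := height_nonneg hdy
  rw [height_ofFn hd] at h1
  have : ((m + 1) * d : ℕ) ≤ n := by exact_mod_cast sub_nonneg.mp h1
  omega

lemma cnt_zero (m n : ℕ) : cnt m n 0 = 1 := by
  unfold cnt
  rw [Finset.card_eq_one]
  refine ⟨fun _ => true, ?_⟩
  ext f
  simp only [Finset.mem_filter, Finset.mem_univ, true_and, Finset.mem_singleton]
  constructor
  · rintro ⟨-, hc⟩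
    funext i
    rw [List.count_eq_zero] at hc
    have : f i ∈ List.ofFn f := List.mem_ofFn.mpr ⟨i, rfl⟩
    cases hfi : f i
    · rw [hfi] at this; exact absurd this hc
    · rfl
  · rintro rfl
    have hc : (List.ofFn fun _ : Fin n => true).count false = 0 := by
      rw [List.count_eq_zero]
      simp [List.mem_ofFn]
    refine ⟨fun k hk => ?_, hc⟩
    have hc' : ((List.ofFn fun _ : Fin n => true).take k).count false = 0 := by
      have := (List.take_sublist k (List.ofFn fun _ : Fin n => true)).count_le false
      omega
    unfold height
    rw [hc']
    simp

lemma cnt_succ (m n d : ℕ) (h : (m + 1) * (d + 1) ≤ n + 1) :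
    cnt m (n + 1) (d + 1) = cnt m n (d + 1) + cnt m n d := by
  classical
  unfold cnt
  rw [Finset.card_filter, Finset.card_filter, Finset.card_filter]
  rw [← Fintype.sum_equiv (Fin.snocEquiv (fun _ : Fin (n+1) => Bool))
    (fun p => if IsDyckPrefix m (List.ofFn ((Fin.snocEquiv (fun _ => Bool)) p)) ∧
        (List.ofFn ((Fin.snocEquiv (fun _ => Bool)) p)).count false = d + 1 then 1 else 0)
    _ (fun p => rfl)]
  rw [Fintype.sum_prod_type]
  rw [Fintype.sum_bool]
  congr 1
  · -- b = true  : these contribute cnt m n (d+1)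
    refine Finset.sum_congr rfl (fun f _ => ?_)
    refine if_congr ?_ rfl rfl
    have hsnoc : List.ofFn ((Fin.snocEquiv (fun _ : Fin (n+1) => Bool)) (true, f))
        = List.ofFn f ++ [true] := by
      show List.ofFn (Fin.snoc f true) = _
      exact ofFn_snoc f true
    rw [hsnoc, isDyckPrefix_append]
    constructor
    · rintro ⟨⟨hdy, -⟩, hc⟩
      refine ⟨hdy, ?_⟩
      simpa using hc
    · rintro ⟨hdy, hc⟩
      refine ⟨⟨hdy, ?_⟩, by simpa using hc⟩
      rw [height_append]
      have := height_nonneg hdy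
      simp only [if_true]
      omega
  · -- b = false : these contribute cnt m n d
    refine Finset.sum_congr rfl (fun f _ => ?_)
    refine if_congr ?_ rfl rfl
    have hsnoc : List.ofFn ((Fin.snocEquiv (fun _ : Fin (n+1) => Bool)) (false, f))
        = List.ofFn f ++ [false] := by
      show List.ofFn (Fin.snoc f false) = _
      exact ofFn_snoc f false
    rw [hsnoc, isDyckPrefix_append]
    constructor
    · rintro ⟨⟨hdy, -⟩, hc⟩
      refine ⟨hdy, ?_⟩
      simp [List.count_append] at hc
      omega
    · rintro ⟨hdy, hc⟩
      have hc' : (List.ofFn f ++ [false]).count false = d + 1 := by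
        simp [List.count_append, hc]
      refine ⟨⟨hdy, ?_⟩, hc'⟩
      rw [height_append]
      rw [height_ofFn hc]
      simp only [Bool.false_eq_true, if_false]
      have : ((m + 1) * d : ℕ) + m ≤ n := by
        have hx : (m + 1) * (d + 1) = (m + 1) * d + (m + 1) := by ring
        omega
      have h2 : (((m + 1) * d : ℕ) : ℤ) + (m : ℤ) ≤ (n : ℤ) := by exact_mod_cast this
      omega

lemma cnt_closed (m : ℕ) : ∀ n d, (m + 1) * (d + 1) ≤ n →
    cnt m n (d + 1) + m * n.choose d = n.choose (d + 1) := by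
  intro n
  induction n with
  | zero =>
    intro d h
    exfalso
    have : 0 < (m + 1) * (d + 1) := by positivity
    omega
  | succ n ih =>
    intro d h
    rw [cnt_succ m n d h]
    rcases Nat.lt_or_ge n ((m + 1) * (d + 1)) with hlt | hle
    · -- (m+1)*(d+1) = n+1, vanishing case
      have hn : n + 1 = (m + 1) * (d + 1) := by omega
      have hvz : cnt m n (d + 1) = 0 := cnt_eq_zero hlt
      rw [hvz]
      cases d with
      | zero =>
        have : n = m := by omega
        subst this
        simp [cnt_zero]
        omega
      | succ e =>
        have hle' : (m + 1) * (e + 1) ≤ n := by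
          have hx : (m + 1) * (e + 1 + 1) = (m + 1) * (e + 1) + (m + 1) := by ring
          omega
        have ihe := ih e hle'
        have key : n.choose (e + 2) = m * n.choose (e + 1) := by
          have h1 := Nat.choose_succ_right_eq n (e + 1)
          have h2 : n - (e + 1) = m * (e + 2) := by
            have hx : (m + 1) * (e + 1 + 1) = m * (e + 2) + (e + 2) := by ring
            omega
          have h3 : n.choose (e + 2) * (e + 2) = (m * n.choose (e + 1)) * (e + 2) := by
            rw [h1, h2]; ring
          exact Nat.eq_of_mul_eq_mul_right (by omega) h3
        rw [Nat.choose_succ_succ' n (e + 1), Nat.choose_succ_succ' n e]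
        rw [Nat.mul_add]
        linarith
    · have ih1 := ih d hle
      cases d with
      | zero =>
        rw [cnt_zero]
        simp only [Nat.zero_add, Nat.choose_zero_right, Nat.choose_one_right] at *
        omega
      | succ e =>
        have hle' : (m + 1) * (e + 1) ≤ n := by
          have hx : (m + 1) * (e + 1 + 1) = (m + 1) * (e + 1) + (m + 1) := by ring
          omega
        have ihe := ih e hle'
        rw [Nat.choose_succ_succ' n (e + 1), Nat.choose_succ_succ' n e]
        rw [Nat.mul_add]
        linarith

lemma tele (m n ν : ℕ) (hn : (m + 1) * ν ≤ n) :
    ∀ k, k ≤ ν → ∑ d ∈ Finset.range (k + 1), m ^ (ν - d) * cnt m n d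
      = m ^ (ν - k) * n.choose k := by
  intro k
  induction k with
  | zero => intro _; simp [cnt_zero]
  | succ k ihk =>
    intro hk
    have hk' : k ≤ ν := by omega
    rw [Finset.sum_range_succ, ihk hk']
    have hcl : cnt m n (k + 1) + m * n.choose k = n.choose (k + 1) := by
      refine cnt_closed m n k ?_
      have hx : (m + 1) * (k + 1) ≤ (m + 1) * ν := by
        exact Nat.mul_le_mul_left _ (by omega)
      omega
    have hpow : ν - k = (ν - (k + 1)) + 1 := by omega
    rw [← hcl, hpow, pow_succ]
    ring

end DyckAux

theorem stmt1 (m n ν r : ℕ) (hm : 1 ≤ m) (hrm : r ≤ m)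
    (hdiv : n = (m + 1) * ν + r) :
    (∑ f : Fin n → Bool,
        if IsDyckPrefix m (List.ofFn f) then m ^ reducedHeight m r (List.ofFn f) else 0)
      = n.choose ν := by
  classical
  have hn : (m + 1) * ν ≤ n := by omega
  have key : ∀ f : Fin n → Bool,
      (if IsDyckPrefix m (List.ofFn f) then m ^ reducedHeight m r (List.ofFn f) else 0)
      = ∑ d ∈ Finset.range (ν + 1),
          if IsDyckPrefix m (List.ofFn f) ∧ (List.ofFn f).count false = d
          then m ^ (ν - d) else 0 := by
    intro f
    by_cases hf : IsDyckPrefix m (List.ofFn f)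
    · have h1 : 0 ≤ height m (List.ofFn f) := DyckAux.height_nonneg hf
      set c := (List.ofFn f).count false with hc
      have hh : height m (List.ofFn f) = (n : ℤ) - (((m + 1) * c : ℕ) : ℤ) :=
        DyckAux.height_ofFn rfl
      have hcle : (m + 1) * c ≤ n := by
        rw [hh] at h1
        exact_mod_cast sub_nonneg.mp h1
      have hcν : c ≤ ν := by
        by_contra hcon
        have : (m + 1) * (ν + 1) ≤ (m + 1) * c := Nat.mul_le_mul_left _ (by omega)
        have hx : (m + 1) * (ν + 1) = (m + 1) * ν + (m + 1) := by ring
        omega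
      have hrh : reducedHeight m r (List.ofFn f) = ν - c := by
        unfold reducedHeight
        rw [hh]
        have hval : (n : ℤ) - (((m + 1) * c : ℕ) : ℤ) - (r : ℤ)
            = ((m : ℤ) + 1) * ((ν - c : ℕ) : ℤ) := by
          have : ((ν - c : ℕ) : ℤ) = (ν : ℤ) - (c : ℤ) := by
            exact_mod_cast Int.ofNat_sub hcν
          rw [this]
          push_cast [hdiv]
          ring
        rw [hval, Int.mul_ediv_cancel_left _ (by positivity)]
        simp
      rw [if_pos hf, hrh]
      have : ∀ d ∈ Finset.range (ν + 1),
          (if IsDyckPrefix m (List.ofFn f) ∧ (List.ofFn f).count false = d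
            then m ^ (ν - d) else 0)
          = if c = d then m ^ (ν - d) else 0 := by
        intro d _
        refine if_congr ?_ rfl rfl
        simp [hf, hc]
      rw [Finset.sum_congr rfl this, Finset.sum_ite_eq]
      rw [if_pos (Finset.mem_range.mpr (by omega))]
    · simp [hf]
  rw [Finset.sum_congr rfl (fun f _ => key f), Finset.sum_comm]
  have step : ∀ d ∈ Finset.range (ν + 1),
      (∑ f : Fin n → Bool,
        if IsDyckPrefix m (List.ofFn f) ∧ (List.ofFn f).count false = d
        then m ^ (ν - d) else 0)
      = m ^ (ν - d) * DyckAux.cnt m n d := by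
    intro d _
    rw [DyckAux.cnt, Finset.card_filter, Finset.mul_sum]
    refine Finset.sum_congr rfl (fun f _ => ?_)
    by_cases hp : IsDyckPrefix m (List.ofFn f) ∧ (List.ofFn f).count false = d
    · simp [hp]
    · simp [hp]
  rw [Finset.sum_congr rfl step]
  have := DyckAux.tele m n ν hn ν le_rfl
  rw [this]
  simp
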